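/- Let A, B, E, P, Â, Ê, Q, L₁, L₂, K, F, F̂ be real matrices of compatible sizes satisfying A P = P Â − B Q, F P = F̂, and E = P Ê + B (L₂ − L₁), and let φ : ℝ × ℝ^l → ℝ^l be continuous. Suppose ξ̂ : [0, ∞) → ℝ^{n̂} is differentiable and satisfies the ODE ξ̂′(t) = Â ξ̂(t) + Ê φ(t, F̂ ξ̂(t)) for all t ≥ 0. Define ξ(t) = P ξ̂(t) and u(t) = K (ξ(t) − P ξ̂(t)) + Q ξ̂(t) + L₁ φ(t, F ξ(t)) − L₂ φ(t, F̂ ξ̂(t)). Then ξ is differentiable and satisfies ξ′(t) = A ξ(t) + B u(t) + E φ(t, F ξ(t)) for all t ≥ 0. In particular, the set { (x, x̂) : x = P x̂ } is invariant for the interconnection of the two (noise-free) systems under the interface u. -/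

import Mathlib

open Matrix

/-- If `ξ̂` solves the abstract ODE, then `ξ = P ξ̂` solves the concrete ODE under the
interface input; i.e. the set `{(x, x̂) : x = P x̂}` is invariant. -/
theorem stmt_16 {n m l nh : ℕ}
    (A : Matrix (Fin n) (Fin n) ℝ) (B : Matrix (Fin n) (Fin m) ℝ)
    (E : Matrix (Fin n) (Fin l) ℝ) (P : Matrix (Fin n) (Fin nh) ℝ)
    (Ahat : Matrix (Fin nh) (Fin nh) ℝ) (Ehat : Matrix (Fin nh) (Fin l) ℝ)
    (Q : Matrix (Fin m) (Fin nh) ℝ) (L1 L2 : Matrix (Fin m) (Fin l) ℝ)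
    (K : Matrix (Fin m) (Fin n) ℝ)
    (F : Matrix (Fin l) (Fin n) ℝ) (Fhat : Matrix (Fin l) (Fin nh) ℝ)
    (hA : A * P = P * Ahat - B * Q) (hF : F * P = Fhat)
    (hE : E = P * Ehat + B * (L2 - L1))
    (φ : ℝ → (Fin l → ℝ) → (Fin l → ℝ))
    (hφ : Continuous fun q : ℝ × (Fin l → ℝ) => φ q.1 q.2)
    (ξhat : ℝ → (Fin nh → ℝ))
    (hξhat : ∀ t : ℝ, 0 ≤ t →
      HasDerivAt ξhat (Ahat.mulVec (ξhat t) + Ehat.mulVec (φ t (Fhat.mulVec (ξhat t)))) t)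
    (ξ : ℝ → (Fin n → ℝ)) (hξ : ∀ t, ξ t = P.mulVec (ξhat t))
    (u : ℝ → (Fin m → ℝ))
    (hu : ∀ t, u t = K.mulVec (ξ t - P.mulVec (ξhat t)) + Q.mulVec (ξhat t) +
      L1.mulVec (φ t (F.mulVec (ξ t))) - L2.mulVec (φ t (Fhat.mulVec (ξhat t)))) :
    ∀ t : ℝ, 0 ≤ t →
      HasDerivAt ξ
        (A.mulVec (ξ t) + B.mulVec (u t) + E.mulVec (φ t (F.mulVec (ξ t)))) t := by
  intro t ht
  have hFeq : F.mulVec (ξ t) = Fhat.mulVec (ξhat t) := by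
    rw [hξ, Matrix.mulVec_mulVec, hF]
  have hd : HasDerivAt (fun s => P.mulVec (ξhat s))
      (P.mulVec (Ahat.mulVec (ξhat t) + Ehat.mulVec (φ t (Fhat.mulVec (ξhat t))))) t := by
    have := (Matrix.mulVecLin P).toContinuousLinearMap.hasFDerivAt.comp_hasDerivAt t
      (hξhat t ht)
    simpa [Function.comp_def] using this
  have heq : A.mulVec (ξ t) + B.mulVec (u t) + E.mulVec (φ t (F.mulVec (ξ t)))
      = P.mulVec (Ahat.mulVec (ξhat t) + Ehat.mulVec (φ t (Fhat.mulVec (ξhat t)))) := by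
    rw [hu, hFeq, hξ, hE]
    simp only [sub_self, Matrix.mulVec_zero, Matrix.mulVec_mulVec, hA,
      Matrix.mul_sub, Matrix.add_mulVec, Matrix.sub_mulVec, Matrix.mulVec_add, Matrix.mulVec_sub,
      zero_add]
    abel
  have := hd.congr_deriv heq.symm
  exact (this.congr_of_eventuallyEq (by filter_upwards with s using (hξ s))).congr_deriv rfl
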